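/- Let P ⊂ ℝ^d be a finite set partitioned into clusters with designated centers, and let S ⊂ ℝ^d be a finite set of centers. Let T > 0, let b ≥ 0 and t ≥ 6 be integers, and let B(S) be a collection of k_{B(S)} clusters C_j (with centers a_j and average cost Δ_j := cost(C_j,a_j)/|C_j|) each of which satisfies cost(C_j,a_j) ≥ 2^b·T and cost(a_j,S) ≥ 2^{t−1}·Δ_j. Then cost(P,S) ≥ (1/12)·k_{B(S)}·2^{b+t}·T. -/
import Mathlib


open Finset

noncomputable section

/-- `ℝ^d` as a Euclidean space. -/
abbrev Pt (d : ℕ) := EuclideanSpace ℝ (Fin d)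

/-- `cost(p,S) = min_{s ∈ S} ‖p - s‖²`. -/
noncomputable def pcost {d : ℕ} (p : Pt d) (S : Finset (Pt d)) : ℝ :=
  sInf ((fun s => ‖p - s‖ ^ 2) '' (S : Set (Pt d)))

/-- `cost(P,S) = ∑_{p ∈ P} min_{s ∈ S} ‖p - s‖²`. -/
noncomputable def scost {d : ℕ} (P S : Finset (Pt d)) : ℝ :=
  ∑ p ∈ P, pcost p S

lemma pcost_nonneg {d : ℕ} (p : Pt d) (S : Finset (Pt d)) : 0 ≤ pcost p S :=
  Real.sInf_nonneg (by rintro x ⟨s, _, rfl⟩; positivity)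

lemma pcost_le {d : ℕ} (p s : Pt d) (S : Finset (Pt d)) (hs : s ∈ S) :
    pcost p S ≤ ‖p - s‖ ^ 2 :=
  csInf_le ⟨0, by rintro x ⟨u, _, rfl⟩; positivity⟩ ⟨s, by simpa using hs, rfl⟩

lemma pcost_move {d : ℕ} (p a : Pt d) (S : Finset (Pt d)) :
    pcost a S ≤ 2 * pcost p S + 2 * ‖p - a‖ ^ 2 := by
  rcases S.eq_empty_or_nonempty with rfl | ⟨s0, hs0⟩
  · simp [pcost, Real.sInf_empty]
  · have h : (pcost a S - 2 * ‖p - a‖ ^ 2) / 2 ≤ pcost p S := by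
      refine le_csInf ⟨‖p - s0‖ ^ 2, ⟨s0, by simpa using hs0, rfl⟩⟩ ?_
      rintro x ⟨s, hs, rfl⟩
      have h1 : pcost a S ≤ ‖a - s‖ ^ 2 := pcost_le a s S (by simpa using hs)
      have h2 : ‖a - s‖ ≤ ‖a - p‖ + ‖p - s‖ := by
        have := norm_add_le (a - p) (p - s); simpa using this
      rw [norm_sub_rev a p] at h2
      show (pcost a S - 2 * ‖p - a‖ ^ 2) / 2 ≤ ‖p - s‖ ^ 2
      nlinarith [norm_nonneg (a - s), norm_nonneg (p - a), norm_nonneg (p - s),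
        mul_self_le_mul_self (norm_nonneg (a - s)) h2,
        sq_nonneg (‖p - a‖ - ‖p - s‖)]
    linarith

/-- Clusters of band `b` and type `t ≥ 6` force `cost(P,S) ≥ (1/12)·k_B·2^{b+t}·T`. -/
theorem structured_cost
    {d : ℕ} {ι : Type*} (J : Finset ι) (C : ι → Finset (Pt d)) (a : ι → Pt d)
    (P S : Finset (Pt d)) (T : ℝ) (b t : ℕ)
    (hT : 0 < T) (ht : 6 ≤ t)
    -- the clusters in `B(S)` are disjoint subsets of `P`
    (hsub : ∀ j ∈ J, C j ⊆ P)
    (hdisj : ∀ i ∈ J, ∀ j ∈ J, i ≠ j → Disjoint (C i) (C j))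
    -- each cluster is in band `b`: `cost(C_j, a_j) ≥ 2^b·T`
    (hband : ∀ j ∈ J, (2 : ℝ) ^ b * T ≤ ∑ p ∈ C j, ‖p - a j‖ ^ 2)
    -- each cluster is of type `t` for `S`: `cost(a_j, S) ≥ 2^{t-1}·Δ_j`
    (htype : ∀ j ∈ J,
      (2 : ℝ) ^ (t - 1) * ((∑ p ∈ C j, ‖p - a j‖ ^ 2) / ((C j).card : ℝ))
        ≤ pcost (a j) S) :
    (1 / 12 : ℝ) * (J.card : ℝ) * 2 ^ (b + t) * T ≤ scost P S := by
  classical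
  obtain ⟨s, rfl⟩ : ∃ s, t = 6 + s := ⟨t - 6, by omega⟩
  have key : ∀ j ∈ J, (1/12 : ℝ) * 2 ^ (b + (6 + s)) * T ≤ ∑ p ∈ C j, pcost p S := by
    intro j hj
    have hb := hband j hj
    have htt := htype j hj
    set W : ℝ := ∑ p ∈ C j, ‖p - a j‖ ^ 2 with hW
    set n : ℝ := ((C j).card : ℝ) with hn
    have hcard : 0 < n := by
      rw [hn]
      have hne : (C j).Nonempty := by
        rw [Finset.nonempty_iff_ne_empty]
        intro hCe
        rw [hW, hCe, Finset.sum_empty] at hb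
        nlinarith [pow_pos (by norm_num : (0:ℝ) < 2) b]
      exact_mod_cast Finset.card_pos.2 hne
    have hsum : n * pcost (a j) S ≤
        2 * (∑ p ∈ C j, pcost p S) + 2 * W := by
      calc n * pcost (a j) S = ∑ _p ∈ C j, pcost (a j) S := by
            rw [Finset.sum_const, nsmul_eq_mul]
        _ ≤ ∑ p ∈ C j, (2 * pcost p S + 2 * ‖p - a j‖ ^ 2) :=
            Finset.sum_le_sum (fun p _ => pcost_move p (a j) S)
        _ = _ := by rw [Finset.sum_add_distrib, ← Finset.mul_sum, ← Finset.mul_sum]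
    have hpow1 : ((2:ℝ) ^ (6 + s - 1)) = 32 * 2 ^ s := by
      have : 6 + s - 1 = 5 + s := by omega
      rw [this, pow_add]; norm_num
    have hpow2 : ((2:ℝ) ^ (b + (6 + s))) = 2 ^ b * 64 * 2 ^ s := by
      rw [pow_add, pow_add]; ring
    rw [hpow1] at htt
    rw [hpow2]
    have hApos : (1:ℝ) ≤ 2 ^ s := one_le_pow₀ (by norm_num)
    have hBpos : (0:ℝ) < 2 ^ b := pow_pos (by norm_num) b
    have hmul : 32 * 2 ^ s * W ≤ n * pcost (a j) S := by
      have := mul_le_mul_of_nonneg_left htt (le_of_lt hcard)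
      calc 32 * 2 ^ s * W = n * (32 * 2 ^ s * (W / n)) := by
            field_simp
        _ ≤ n * pcost (a j) S := this
    have hWpos : (2:ℝ) ^ b * T ≤ W := hb
    nlinarith [mul_pos hBpos hT, mul_le_mul_of_nonneg_left hWpos
      (by nlinarith [hApos] : (0:ℝ) ≤ 16 * 2 ^ s - 1)]
  have hdisj' : (J : Set ι).PairwiseDisjoint C := fun i hi j hj hij => hdisj i hi j hj hij
  calc (1 / 12 : ℝ) * (J.card : ℝ) * 2 ^ (b + (6 + s)) * T
      = ∑ _j ∈ J, (1/12 : ℝ) * 2 ^ (b + (6 + s)) * T := by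
        rw [Finset.sum_const, nsmul_eq_mul]; ring
    _ ≤ ∑ j ∈ J, ∑ p ∈ C j, pcost p S := Finset.sum_le_sum key
    _ = ∑ p ∈ J.biUnion C, pcost p S := (Finset.sum_biUnion hdisj').symm
    _ ≤ scost P S := Finset.sum_le_sum_of_subset_of_nonneg
        (fun p hp => by
          rcases Finset.mem_biUnion.1 hp with ⟨j, hj, hpj⟩
          exact hsub j hj hpj)
        (fun p _ _ => pcost_nonneg p S)
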